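/- Let n ∈ ℕ, 0 < ε ≤ 1 and M ≥ 0. Let E and F be normed vector spaces and U ⊆ E. Let f⁰ : U → F and fᵏ : U → L_s(E^{⊗k}, F) for k ∈ {1,…,n}. Consider the assertions: (A1) the collection (f⁰, f¹, …, fⁿ) is Lip-(n+ε) on U with ‖(f⁰,…,fⁿ)‖_{Lip-(n+ε)} ≤ M; (A2) f⁰ is n times Fréchet differentiable on U with successive derivatives f¹, …, fⁿ, the sup norms ‖f⁰‖_∞, …, ‖fⁿ‖_∞ are all at most M, and ‖fⁿ(x) − fⁿ(y)‖ ≤ M‖x−y‖^ε for all x, y ∈ U. Then: if U is open, (A1) implies (A2); and if U is open and convex, (A1) and (A2) are equivalent. -/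

import Mathlib

open Metric Set

noncomputable section

/-- The Taylor remainder of order `k` associated to the collection
`f = (f⁰, f¹, …, fⁿ)` (each `fᵏ` viewed as a continuous `k`-linear map),
evaluated at the elementary tensor `v₁ ⊗ ⋯ ⊗ v_k`:
`Rₖ(x,y)(v) = fᵏ(x)(v) - ∑_{j=k}^{n} fʲ(y)(v ⊗ (x-y)^{⊗(j-k)}/(j-k)!)`. -/
def lipRemainder {E F : Type*} [NormedAddCommGroup E] [NormedSpace ℝ E]
    [NormedAddCommGroup F] [NormedSpace ℝ F]
    (n : ℕ) (f : ∀ k : ℕ, E → ContinuousMultilinearMap ℝ (fun _ : Fin k => E) F)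
    (k : ℕ) (x y : E) (v : Fin k → E) : F :=
  f k x v - ∑ j ∈ Finset.range (n - k + 1),
    ((j.factorial : ℝ)⁻¹) • f (k + j) y (Fin.append v fun _ : Fin j => x - y)

/-- The collection `(f^{k₀}, …, fⁿ)` satisfies the `Lip-γ` bounds with constant `M`
on `U`: each `fᵏ` is bounded by `M` (as a multilinear map) and each remainder of
order `k` is bounded by `M ‖x-y‖^{γ-k}` (times the norm of the tensor).
Taking `k₀ = 0` gives the usual notion of a `Lip-γ` collection; taking `k₀ = 1`
expresses that the shifted collection `(f¹, …, fⁿ)` is `Lip-(γ-1)`. -/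
def IsLipCollBetween {E F : Type*} [NormedAddCommGroup E] [NormedSpace ℝ E]
    [NormedAddCommGroup F] [NormedSpace ℝ F]
    (γ : ℝ) (k₀ n : ℕ) (M : ℝ)
    (f : ∀ k : ℕ, E → ContinuousMultilinearMap ℝ (fun _ : Fin k => E) F)
    (U : Set E) : Prop :=
  (∀ k, k₀ ≤ k → k ≤ n → ∀ x ∈ U, ∀ v : Fin k → E,
      ‖f k x v‖ ≤ M * ∏ i, ‖v i‖) ∧
  (∀ k, k₀ ≤ k → k ≤ n → ∀ x ∈ U, ∀ y ∈ U, ∀ v : Fin k → E,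
      ‖lipRemainder n f k x y v‖ ≤ M * ‖x - y‖ ^ (γ - k) * ∏ i, ‖v i‖)

/-- Each member of the collection takes values in the symmetric multilinear maps. -/
def IsSymmColl {E F : Type*} [NormedAddCommGroup E] [NormedSpace ℝ E]
    [NormedAddCommGroup F] [NormedSpace ℝ F]
    (n : ℕ)
    (f : ∀ k : ℕ, E → ContinuousMultilinearMap ℝ (fun _ : Fin k => E) F)
    (U : Set E) : Prop :=
  ∀ k, k ≤ n → ∀ x ∈ U, ∀ (σ : Equiv.Perm (Fin k)) (v : Fin k → E),
    f k x (v ∘ σ) = f k x v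
set_option linter.unusedSectionVars false

section AuxLemmas
variable {E F : Type*} [NormedAddCommGroup E] [NormedSpace ℝ E]
    [NormedAddCommGroup F] [NormedSpace ℝ F]

lemma append_zero' {k : ℕ} (v : Fin k → E) (w : Fin 0 → E) : Fin.append v w = v := by
  funext i
  have hi : (i : ℕ) < k := i.isLt
  simp only [Fin.append, Fin.addCases, hi, dite_true]
  rfl

lemma comp_rotate {k j : ℕ} (v : Fin k → E) (h : E) :
    (Fin.append v (fun _ : Fin (j+1) => h)) ∘ ⇑(finRotate (k + j + 1))⁻¹
      = Fin.cons h (Fin.append v (fun _ : Fin j => h)) := by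
  funext i
  induction i using Fin.cases with
  | zero =>
      have h0 : (finRotate (k + j + 1))⁻¹ 0 = Fin.last (k+j) := by
        rw [Equiv.Perm.inv_def, Equiv.symm_apply_eq, finRotate_last]
      have h2 : Fin.last (k+j) = Fin.natAdd k (Fin.last j) := by ext; simp
      show Fin.append v (fun _ : Fin (j+1) => h) ((finRotate (k + j + 1))⁻¹ 0) = _
      rw [h0, h2, Fin.append_right, Fin.cons_zero]
  | succ i' =>
      have h1 : (finRotate (k + j + 1))⁻¹ i'.succ = i'.castSucc := by
        rw [Equiv.Perm.inv_def, Equiv.symm_apply_eq, finRotate_succ_apply,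
          Fin.coeSucc_eq_succ]
      show Fin.append v (fun _ : Fin (j+1) => h) ((finRotate (k + j + 1))⁻¹ i'.succ) = _
      rw [h1, Fin.cons_succ]
      induction i' using Fin.addCases with
      | left l =>
          have h3 : (Fin.castAdd j l).castSucc = Fin.castAdd (j+1) l := by ext; simp
          rw [h3, Fin.append_left, Fin.append_left]
      | right r =>
          have h4 : (Fin.natAdd k r).castSucc = Fin.natAdd k r.castSucc := by ext; simp
          rw [h4, Fin.append_right, Fin.append_right]

lemma symm_cons_append {k j : ℕ} (g : ContinuousMultilinearMap ℝ (fun _ : Fin (k+j+1) => E) F)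
    (hg : ∀ (σ : Equiv.Perm (Fin (k+j+1))) (w : Fin (k+j+1) → E), g (w ∘ σ) = g w)
    (v : Fin k → E) (h : E) :
    g (Fin.cons h (Fin.append v (fun _ : Fin j => h)))
      = g (Fin.append (m := k) (n := j+1) v (fun _ => h)) := by
  rw [← comp_rotate v h]; exact hg _ _

lemma fcast (f : ∀ k : ℕ, E → ContinuousMultilinearMap ℝ (fun _ : Fin k => E) F)
    {a b : ℕ} (e : a = b) (y : E) (w : Fin b → E) :
    f b y w = f a y (fun i => w (Fin.cast e i)) := by subst e; rfl

lemma reassoc (f : ∀ k : ℕ, E → ContinuousMultilinearMap ℝ (fun _ : Fin k => E) F)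
    (y : E) (k i : ℕ) (t : ℝ) (h : E) (v : Fin k → E) :
    f (k + 1 + i) y (Fin.append (Fin.append v (fun _ : Fin 1 => h)) (fun _ : Fin i => t • h))
      = t ^ i • f (k + (i+1)) y (Fin.append v (fun _ : Fin (i+1) => h)) := by
  have e : k + (i+1) = k + 1 + i := by omega
  rw [fcast f e y]
  have hW : (fun l => Fin.append (Fin.append v (fun _ : Fin 1 => h)) (fun _ : Fin i => t • h)
      (Fin.cast e l))
      = fun l : Fin (k+(i+1)) => (if (l:ℕ) < k+1 then (1:ℝ) else t) •
          Fin.append v (fun _ : Fin (i+1) => h) l := by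
    funext l
    simp only [Fin.append, Fin.addCases, Fin.cast, Fin.castLT, eq_rec_constant]
    by_cases h1 : (l:ℕ) < k
    · simp [h1, Nat.lt_succ_of_lt h1, Nat.lt_add_right _ h1]
    · by_cases h2 : (l:ℕ) < k + 1
      · simp [h1, h2]
      · simp [h1, h2]
  rw [hW, ContinuousMultilinearMap.map_smul_univ]
  congr 1
  rw [Fin.prod_univ_add]
  have left1 : ∀ l : Fin k,
      (if ((Fin.castAdd (i+1) l : Fin (k+(i+1))):ℕ) < k+1 then (1:ℝ) else t) = 1 := by
    intro l; simp [Nat.lt_succ_of_lt l.isLt, Nat.lt_add_right _ l.isLt]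
  simp only [left1, Finset.prod_const_one, one_mul]
  rw [Fin.prod_univ_succ]
  simp [Fin.natAdd]

lemma prod_append_const {k j : ℕ} (v : Fin k → E) (d : E) :
    (∏ l : Fin (k+j), ‖Fin.append v (fun _ : Fin j => d) l‖) = (∏ i, ‖v i‖) * ‖d‖ ^ j := by
  rw [Fin.prod_univ_add]
  congr 1
  · exact Finset.prod_congr rfl fun i _ => by rw [Fin.append_left]
  · simp [Fin.append_right]

lemma lipRemainder_top (n : ℕ)
    (f : ∀ k : ℕ, E → ContinuousMultilinearMap ℝ (fun _ : Fin k => E) F)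
    (x y : E) (v : Fin n → E) :
    lipRemainder n f n x y v = f n x v - f n y v := by
  unfold lipRemainder
  rw [Nat.sub_self, Finset.sum_range_one]
  rw [append_zero' v]
  norm_num
  rfl

lemma lipRemainder_self (n : ℕ)
    (f : ∀ k : ℕ, E → ContinuousMultilinearMap ℝ (fun _ : Fin k => E) F)
    (k : ℕ) (x : E) (v : Fin k → E) :
    lipRemainder n f k x x v = 0 := by
  unfold lipRemainder
  rw [Finset.sum_range_succ']
  have h0 : ((Nat.factorial 0 : ℝ))⁻¹ • f (k + 0) x
      (Fin.append v fun _ : Fin 0 => x - x) = f k x v := by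
    rw [append_zero' v]
    norm_num
    rfl
  have h1 : ∀ i ∈ Finset.range (n - k), ((Nat.factorial (i+1) : ℝ))⁻¹ • f (k + (i+1)) x
      (Fin.append v fun _ : Fin (i+1) => x - x) = 0 := by
    intro i _
    have : f (k + (i+1)) x (Fin.append v fun _ : Fin (i+1) => x - x) = 0 := by
      apply ContinuousMultilinearMap.map_coord_zero _ (Fin.natAdd k (0 : Fin (i+1)))
      rw [Fin.append_right]
      exact sub_self x
    rw [this, smul_zero]
  rw [Finset.sum_congr rfl h1, h0]
  simp

lemma remainder_bound (n : ℕ) (ε M : ℝ) (hε0 : 0 < ε) (hM : 0 ≤ M)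
    (U : Set E) (hconv : Convex ℝ U)
    (f : ∀ k : ℕ, E → ContinuousMultilinearMap ℝ (fun _ : Fin k => E) F)
    (hsymm : ∀ k, k ≤ n → ∀ x ∈ U, ∀ (σ : Equiv.Perm (Fin k)) (v : Fin k → E),
      f k x (v ∘ σ) = f k x v)
    (hT : HasFTaylorSeriesUpToOn (n : ℕ) (fun x => f 0 x 0) (fun x k => f k x) U)
    (hH : ∀ x ∈ U, ∀ y ∈ U, ‖f n x - f n y‖ ≤ M * ‖x - y‖ ^ ε) :
    ∀ (j k : ℕ), k ≤ n → n - k = j → ∀ x ∈ U, ∀ y ∈ U, ∀ v : Fin k → E,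
      ‖lipRemainder n f k x y v‖ ≤ M * ‖x - y‖ ^ ((n:ℝ) + ε - k) * ∏ l, ‖v l‖ := by
  intro j
  induction j with
  | zero =>
      intro k hk hnk x hx y hy v
      obtain rfl : k = n := by omega
      rw [lipRemainder_top]
      have h1 : ‖f k x v - f k y v‖ ≤ ‖f k x - f k y‖ * ∏ l, ‖v l‖ := by
        simpa using (f k x - f k y).le_opNorm v
      have h2 : ((k:ℝ) + ε - k) = ε := by ring
      rw [h2]
      refine h1.trans ?_
      have := hH x hx y hy
      exact mul_le_mul_of_nonneg_right this (Finset.prod_nonneg fun _ _ => norm_nonneg _)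
  | succ j ih =>
      intro k hk hnk x hx y hy v
      have hkn : k < n := by omega
      by_cases hxy : x = y
      · subst hxy
        rw [lipRemainder_self, norm_zero]
        positivity
      have hcmem : ∀ t ∈ Icc (0:ℝ) 1, y + t • (x - y) ∈ U := by
        intro t ht
        have h := hconv hy hx (by linarith [ht.2] : (0:ℝ) ≤ 1 - t) ht.1 (by ring)
        convert h using 1
        rw [smul_sub, sub_smul, one_smul]
        abel
      -- derivative of the first part
      have hf1 : ∀ t₀ ∈ Icc (0:ℝ) 1, HasDerivWithinAt (fun t => f k (y + t • (x - y)) v)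
          (f (k+1) (y + t₀ • (x - y)) (Fin.cons (x - y) v)) (Icc 0 1) t₀ := by
        intro t₀ ht₀
        have hklt : (k : ℕ∞) < ((n:ℕ) : WithTop ℕ∞) := by exact_mod_cast hkn
        have hfd := hT.fderivWithin k hklt _ (hcmem t₀ ht₀)
        have hcd : HasDerivWithinAt (fun t : ℝ => y + t • (x - y)) (x - y) (Icc 0 1) t₀ := by
          simpa using ((hasDerivWithinAt_id t₀ (Icc (0:ℝ) 1)).smul_const (x - y)).const_add y
        have hcomp := hfd.comp_hasDerivWithinAt t₀ hcd (fun t ht => hcmem t ht)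
        have hev := (ContinuousMultilinearMap.apply ℝ (fun _ : Fin k => E) F
          v).hasFDerivAt.comp_hasDerivWithinAt t₀ hcomp
        simpa only [Function.comp_def, ContinuousMultilinearMap.apply_apply,
          ContinuousMultilinearMap.curryLeft_apply] using hev
      -- derivative of the whole ψ
      have hψder : ∀ t₀ ∈ Icc (0:ℝ) 1, HasDerivWithinAt
          (fun t => f k (y + t • (x - y)) v - ∑ j ∈ Finset.range (n - k + 1),
            (((j.factorial : ℝ))⁻¹ * t ^ j) • f (k + j) y (Fin.append v fun _ : Fin j => x - y))
          (lipRemainder n f (k+1) (y + t₀ • (x - y)) y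
            (Fin.append v fun _ : Fin 1 => x - y)) (Icc 0 1) t₀ := by
        intro t₀ ht₀
        have hsum : HasDerivWithinAt (fun t => ∑ j ∈ Finset.range (n - k + 1),
            (((j.factorial : ℝ))⁻¹ * t ^ j) • f (k + j) y (Fin.append v fun _ : Fin j => x - y))
            (∑ j ∈ Finset.range (n - k + 1),
              (((j.factorial : ℝ))⁻¹ * ((j:ℝ) * t₀ ^ (j - 1))) •
                f (k + j) y (Fin.append v fun _ : Fin j => x - y)) (Icc 0 1) t₀ := by
          refine HasDerivWithinAt.fun_sum fun i _ => ?_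
          exact ((hasDerivWithinAt_pow i t₀ (s := Icc 0 1)).const_mul _).smul_const _
        have raw := (hf1 t₀ ht₀).sub hsum
        have heq : f (k+1) (y + t₀ • (x - y)) (Fin.cons (x - y) v) -
            ∑ j ∈ Finset.range (n - k + 1),
              (((j.factorial : ℝ))⁻¹ * ((j:ℝ) * t₀ ^ (j - 1))) •
                f (k + j) y (Fin.append v fun _ : Fin j => x - y)
            = lipRemainder n f (k+1) (y + t₀ • (x - y)) y
              (Fin.append v fun _ : Fin 1 => x - y) := by
          unfold lipRemainder
          congr 1
          · have hg := hsymm (k+1) (by omega) _ (hcmem t₀ ht₀)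
            have hca := symm_cons_append (k := k) (j := 0)
              (f (k+1) (y + t₀ • (x - y))) (fun σ w => hg σ w) v (x - y)
            rw [append_zero' v] at hca
            exact hca
          · rw [Finset.sum_range_succ']
            rw [show n - (k+1) + 1 = n - k from by omega]
            simp only [Nat.cast_zero, zero_mul, mul_zero, zero_smul, add_zero]
            refine Finset.sum_congr rfl fun i _ => ?_
            have harg : (fun _ : Fin i => (y + t₀ • (x - y)) - y)
                = (fun _ : Fin i => t₀ • (x - y)) := by
              funext l; abel
            rw [harg, reassoc f y k i t₀ (x - y) v, smul_smul]
            congr 1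
            have hfact : (((i+1).factorial : ℝ)) = ((i:ℝ)+1) * (i.factorial : ℝ) := by
              rw [Nat.factorial_succ]; push_cast; ring
            have hfne : (i.factorial : ℝ) ≠ 0 := by
              exact_mod_cast (Nat.factorial_pos i).ne'
            rw [hfact, Nat.add_sub_cancel]
            push_cast
            field_simp
        exact heq ▸ raw
      -- bound on the derivative
      have hprodw : (∏ l : Fin (k+1), ‖Fin.append v (fun _ : Fin 1 => x - y) l‖)
          = (∏ i, ‖v i‖) * ‖x - y‖ := by
        rw [prod_append_const, pow_one]
      have hxy0 : (0:ℝ) < ‖x - y‖ := by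
        rw [norm_pos_iff, sub_ne_zero]; exact hxy
      have hb : ∀ t ∈ Ico (0:ℝ) 1, ‖lipRemainder n f (k+1) (y + t • (x - y)) y
          (Fin.append v fun _ : Fin 1 => x - y)‖
          ≤ M * ‖x - y‖ ^ ((n:ℝ) + ε - k) * ∏ l, ‖v l‖ := by
        intro t ht
        have hIH := ih (k+1) (by omega) (by omega) (y + t • (x - y))
          (hcmem t ⟨ht.1, ht.2.le⟩) y hy (Fin.append v fun _ : Fin 1 => x - y)
        rw [hprodw] at hIH
        have harg2 : ‖(y + t • (x - y)) - y‖ = t * ‖x - y‖ := by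
          rw [add_sub_cancel_left, norm_smul, Real.norm_eq_abs, abs_of_nonneg ht.1]
        rw [harg2] at hIH
        refine hIH.trans ?_
        set p : ℝ := (n:ℝ) + ε - ((k+1 : ℕ) : ℝ) with hp
        have hp0 : 0 ≤ p := by
          have : ((k:ℝ)+1) ≤ (n:ℝ) := by exact_mod_cast hkn
          rw [hp]; push_cast; linarith
        have h1 : (t * ‖x - y‖) ^ p ≤ ‖x - y‖ ^ p := by
          apply Real.rpow_le_rpow (mul_nonneg ht.1 (norm_nonneg _)) _ hp0
          calc t * ‖x - y‖ ≤ 1 * ‖x - y‖ := by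
                exact mul_le_mul_of_nonneg_right ht.2.le (norm_nonneg _)
            _ = ‖x - y‖ := one_mul _
        calc M * (t * ‖x - y‖) ^ p * ((∏ i, ‖v i‖) * ‖x - y‖)
            ≤ M * ‖x - y‖ ^ p * ((∏ i, ‖v i‖) * ‖x - y‖) := by
              apply mul_le_mul_of_nonneg_right _ (by positivity)
              exact mul_le_mul_of_nonneg_left h1 hM
          _ = M * (‖x - y‖ ^ p * ‖x - y‖) * ∏ i, ‖v i‖ := by ring
          _ = M * ‖x - y‖ ^ ((n:ℝ) + ε - k) * ∏ i, ‖v i‖ := by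
              rw [← Real.rpow_add_one hxy0.ne']
              congr 2
              rw [hp]; push_cast; ring
      -- mean value theorem
      have hMVT := norm_image_sub_le_of_norm_deriv_le_segment_01' hψder hb
      have hψ1 : f k (y + (1:ℝ) • (x - y)) v - ∑ j ∈ Finset.range (n - k + 1),
          (((j.factorial : ℝ))⁻¹ * (1:ℝ) ^ j) • f (k + j) y (Fin.append v fun _ : Fin j => x - y)
          = lipRemainder n f k x y v := by
        have hy1 : y + (1:ℝ) • (x - y) = x := by rw [one_smul]; abel
        rw [hy1]
        unfold lipRemainder
        congr 1
        refine Finset.sum_congr rfl fun i _ => ?_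
        rw [one_pow, mul_one]
      have hψ0 : f k (y + (0:ℝ) • (x - y)) v - ∑ j ∈ Finset.range (n - k + 1),
          (((j.factorial : ℝ))⁻¹ * (0:ℝ) ^ j) • f (k + j) y (Fin.append v fun _ : Fin j => x - y)
          = 0 := by
        have hy0 : y + (0:ℝ) • (x - y) = y := by rw [zero_smul, add_zero]
        rw [hy0, Finset.sum_range_succ']
        have hz : ∀ i ∈ Finset.range (n - k), ((((i+1).factorial : ℝ))⁻¹ * (0:ℝ) ^ (i+1)) •
            f (k + (i+1)) y (Fin.append v fun _ : Fin (i+1) => x - y) = 0 := by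
          intro i _
          rw [zero_pow (Nat.succ_ne_zero i), mul_zero, zero_smul]
        rw [Finset.sum_congr rfl hz]
        have h00 : (((Nat.factorial 0 : ℝ))⁻¹ * (0:ℝ) ^ (0:ℕ)) •
            f (k + 0) y (Fin.append v fun _ : Fin 0 => x - y) = f k y v := by
          rw [append_zero' v]
          norm_num
          rfl
        rw [h00]
        simp
      beta_reduce at hMVT
      rw [hψ1, hψ0, sub_zero] at hMVT
      exact hMVT

lemma tendsto_aux (C ε : ℝ) (hε0 : 0 < ε) (x : E) (U : Set E) :
    Filter.Tendsto (fun y : E => C * ‖y - x‖ ^ ε) (nhdsWithin x U) (nhds 0) := by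
  have h0 : Filter.Tendsto (fun y : E => ‖y - x‖) (nhds x) (nhds 0) := by
    have hcont : Continuous (fun y : E => ‖y - x‖) :=
      (continuous_id.sub continuous_const).norm
    have h := hcont.tendsto x
    simpa using h
  have h1 : Filter.Tendsto (fun t : ℝ => C * t ^ ε) (nhds 0) (nhds 0) := by
    have h2 : ContinuousAt (fun t : ℝ => t ^ ε) 0 := Real.continuousAt_rpow_const 0 ε (Or.inr hε0.le)
    have h3 := h2.tendsto
    rw [Real.zero_rpow hε0.ne'] at h3
    have := h3.const_mul C
    simpa using this
  exact (h1.comp h0).mono_left nhdsWithin_le_nhds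

lemma lip_fderiv (n : ℕ) (ε M : ℝ) (hε0 : 0 < ε) (hε1 : ε ≤ 1) (hM : 0 ≤ M)
    (U : Set E)
    (f : ∀ k : ℕ, E → ContinuousMultilinearMap ℝ (fun _ : Fin k => E) F)
    (hsymm : ∀ k, k ≤ n → ∀ x ∈ U, ∀ (σ : Equiv.Perm (Fin k)) (v : Fin k → E),
      f k x (v ∘ σ) = f k x v)
    (h1 : ∀ k, k ≤ n → ∀ x ∈ U, ∀ v : Fin k → E, ‖f k x v‖ ≤ M * ∏ i, ‖v i‖)
    (h2 : ∀ k, k ≤ n → ∀ x ∈ U, ∀ y ∈ U, ∀ v : Fin k → E,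
      ‖lipRemainder n f k x y v‖ ≤ M * ‖x - y‖ ^ ((n:ℝ) + ε - k) * ∏ i, ‖v i‖) :
    ∀ m : ℕ, m < n → ∀ x ∈ U, HasFDerivWithinAt (fun y => f m y) ((f (m+1) x).curryLeft) U x := by
  intro m hmn x hx
  set C : ℝ := M * (1 + (n:ℝ)) with hC
  have hC0 : 0 ≤ C := by positivity
  have key : ∀ y ∈ U, ‖y - x‖ ≤ 1 →
      ‖f m y - f m x - (f (m+1) x).curryLeft (y - x)‖ ≤ C * ‖y - x‖ ^ (1 + ε) := by
    intro y hyU hy1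
    by_cases hyx : y = x
    · subst hyx
      simp only [sub_self, map_zero, sub_zero, norm_zero]
      exact mul_nonneg hC0 (Real.rpow_nonneg le_rfl _)
    have hnorm0 : (0:ℝ) < ‖y - x‖ := by rw [norm_pos_iff, sub_ne_zero]; exact hyx
    refine ContinuousMultilinearMap.opNorm_le_bound
      (mul_nonneg hC0 (Real.rpow_nonneg (norm_nonneg _) _)) fun v => ?_
    rw [ContinuousMultilinearMap.sub_apply, ContinuousMultilinearMap.sub_apply,
      ContinuousMultilinearMap.curryLeft_apply]
    have hg := hsymm (m+1) (by omega) x hx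
    have hca := symm_cons_append (k := m) (j := 0) (f (m+1) x) (fun σ w => hg σ w) v (y - x)
    rw [append_zero' v] at hca
    rw [hca]
    set s := n - m - 1 with hs
    have hrange : n - m + 1 = s + 1 + 1 := by omega
    have hid : f m y v = lipRemainder n f m y x v + ∑ j ∈ Finset.range (n - m + 1),
        ((j.factorial : ℝ)⁻¹) • f (m + j) x (Fin.append v fun _ : Fin j => y - x) := by
      unfold lipRemainder
      rw [sub_add_cancel]
    rw [hid, hrange, Finset.sum_range_succ', Finset.sum_range_succ']
    have hg0 : ((Nat.factorial 0 : ℝ))⁻¹ • f (m + 0) x (Fin.append v fun _ : Fin 0 => y - x)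
        = f m x v := by
      rw [append_zero' v]
      norm_num
      rfl
    have hg1 : (((0+1 : ℕ).factorial : ℝ))⁻¹ •
        f (m + (0+1)) x (Fin.append v fun _ : Fin (0+1) => y - x)
        = f (m+1) x (Fin.append v fun _ : Fin 1 => y - x) := by
      norm_num [Nat.factorial]
    rw [hg0, hg1]
    have hab : lipRemainder n f m y x v +
        ((∑ i ∈ Finset.range s, ((Nat.factorial (i+1+1) : ℝ))⁻¹ •
            f (m + (i+1+1)) x (Fin.append v fun _ : Fin (i+1+1) => y - x) +
          f (m+1) x (Fin.append v fun _ : Fin 1 => y - x)) + f m x v) -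
        f m x v - f (m+1) x (Fin.append v fun _ : Fin 1 => y - x)
        = lipRemainder n f m y x v + ∑ i ∈ Finset.range s, ((Nat.factorial (i+1+1) : ℝ))⁻¹ •
            f (m + (i+1+1)) x (Fin.append v fun _ : Fin (i+1+1) => y - x) := by
      abel
    rw [hab]
    have hprodv : (0:ℝ) ≤ ∏ i, ‖v i‖ := Finset.prod_nonneg fun _ _ => norm_nonneg _
    have hbase : ∀ q : ℝ, 1 + ε ≤ q → ‖y - x‖ ^ q ≤ ‖y - x‖ ^ (1 + ε) :=
      fun q hq => Real.rpow_le_rpow_of_exponent_ge hnorm0 hy1 hq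
    have hrembd : ‖lipRemainder n f m y x v‖ ≤ M * ‖y - x‖ ^ (1 + ε) * ∏ i, ‖v i‖ := by
      refine (h2 m (by omega) y hyU x hx v).trans ?_
      have hexp : 1 + ε ≤ (n:ℝ) + ε - m := by
        have : (m:ℝ) + 1 ≤ (n:ℝ) := by exact_mod_cast hmn
        linarith
      exact mul_le_mul_of_nonneg_right
        (mul_le_mul_of_nonneg_left (hbase _ hexp) hM) hprodv
    have htermbd : ∀ i ∈ Finset.range s, ‖((Nat.factorial (i+1+1) : ℝ))⁻¹ •
        f (m + (i+1+1)) x (Fin.append v fun _ : Fin (i+1+1) => y - x)‖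
        ≤ M * ‖y - x‖ ^ (1 + ε) * ∏ i, ‖v i‖ := by
      intro i hi
      rw [norm_smul]
      have hfb := h1 (m + (i+1+1)) (by simp only [Finset.mem_range] at hi; omega) x hx
        (Fin.append v fun _ : Fin (i+1+1) => y - x)
      rw [prod_append_const] at hfb
      have hinv : ‖((Nat.factorial (i+1+1) : ℝ))⁻¹‖ ≤ 1 := by
        rw [Real.norm_eq_abs, abs_of_nonneg (by positivity)]
        rw [inv_le_one_iff₀]
        right
        exact_mod_cast (Nat.one_le_iff_ne_zero.mpr (Nat.factorial_ne_zero _))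
      have hpow : ‖y - x‖ ^ (i+1+1 : ℕ) ≤ ‖y - x‖ ^ (1 + ε) := by
        rw [← Real.rpow_natCast]
        apply hbase
        push_cast
        linarith
      calc ‖((Nat.factorial (i+1+1) : ℝ))⁻¹‖ *
            ‖f (m + (i+1+1)) x (Fin.append v fun _ : Fin (i+1+1) => y - x)‖
          ≤ 1 * (M * ((∏ i, ‖v i‖) * ‖y - x‖ ^ (i+1+1 : ℕ))) := by
            exact mul_le_mul hinv hfb (norm_nonneg _) zero_le_one
        _ = M * ‖y - x‖ ^ (i+1+1 : ℕ) * ∏ i, ‖v i‖ := by ring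
        _ ≤ M * ‖y - x‖ ^ (1 + ε) * ∏ i, ‖v i‖ := by
            exact mul_le_mul_of_nonneg_right
              (mul_le_mul_of_nonneg_left hpow hM) hprodv
    calc ‖lipRemainder n f m y x v + ∑ i ∈ Finset.range s, ((Nat.factorial (i+1+1) : ℝ))⁻¹ •
            f (m + (i+1+1)) x (Fin.append v fun _ : Fin (i+1+1) => y - x)‖
        ≤ ‖lipRemainder n f m y x v‖ + ∑ i ∈ Finset.range s, ‖((Nat.factorial (i+1+1) : ℝ))⁻¹ •
            f (m + (i+1+1)) x (Fin.append v fun _ : Fin (i+1+1) => y - x)‖ := by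
          exact (norm_add_le _ _).trans (by gcongr; exact norm_sum_le _ _)
      _ ≤ M * ‖y - x‖ ^ (1 + ε) * ∏ i, ‖v i‖ +
          ∑ _i ∈ Finset.range s, M * ‖y - x‖ ^ (1 + ε) * ∏ i, ‖v i‖ := by
          exact add_le_add hrembd (Finset.sum_le_sum htermbd)
      _ = (1 + (s:ℝ)) * (M * ‖y - x‖ ^ (1 + ε) * ∏ i, ‖v i‖) := by
          rw [Finset.sum_const, Finset.card_range]
          push_cast
          ring
      _ ≤ (1 + (n:ℝ)) * (M * ‖y - x‖ ^ (1 + ε) * ∏ i, ‖v i‖) := by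
          have hsn : (s:ℝ) ≤ (n:ℝ) := by exact_mod_cast (by omega : s ≤ n)
          have : (0:ℝ) ≤ M * ‖y - x‖ ^ (1 + ε) * ∏ i, ‖v i‖ := by positivity
          nlinarith
      _ = C * ‖y - x‖ ^ (1 + ε) * ∏ i, ‖v i‖ := by rw [hC]; ring
  refine hasFDerivWithinAt_iff_isLittleO.mpr ?_
  rw [Asymptotics.isLittleO_iff]
  intro c hc
  have htend := tendsto_aux C ε hε0 x U
  have hev1 : ∀ᶠ y in nhdsWithin x U, C * ‖y - x‖ ^ ε < c :=
    Filter.Tendsto.eventually_lt_const hc htend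
  have hev2 : ∀ᶠ y in nhdsWithin x U, y ∈ U := eventually_mem_nhdsWithin
  have hev3 : ∀ᶠ y in nhdsWithin x U, ‖y - x‖ ≤ 1 := by
    have h0 : Filter.Tendsto (fun y : E => ‖y - x‖) (nhds x) (nhds 0) := by
      have hcont : Continuous (fun y : E => ‖y - x‖) :=
        (continuous_id.sub continuous_const).norm
      have h := hcont.tendsto x
      simpa using h
    have : ∀ᶠ y in nhds x, ‖y - x‖ < 1 :=
      Filter.Tendsto.eventually_lt_const (by norm_num) h0
    exact ((this.mono fun y hy => hy.le).filter_mono nhdsWithin_le_nhds)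
  filter_upwards [hev1, hev2, hev3] with y hyc hyU hy1
  calc ‖f m y - f m x - (f (m+1) x).curryLeft (y - x)‖
      ≤ C * ‖y - x‖ ^ (1 + ε) := key y hyU hy1
    _ = (C * ‖y - x‖ ^ ε) * ‖y - x‖ := by
        rw [Real.rpow_add' (norm_nonneg _) (by positivity), Real.rpow_one]
        ring
    _ ≤ c * ‖y - x‖ := mul_le_mul_of_nonneg_right hyc.le (norm_nonneg _)

lemma lip_to_A2 (n : ℕ) (ε M : ℝ) (hε0 : 0 < ε) (hε1 : ε ≤ 1) (hM : 0 ≤ M)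
    (U : Set E)
    (f : ∀ k : ℕ, E → ContinuousMultilinearMap ℝ (fun _ : Fin k => E) F)
    (hsymm : ∀ k, k ≤ n → ∀ x ∈ U, ∀ (σ : Equiv.Perm (Fin k)) (v : Fin k → E),
      f k x (v ∘ σ) = f k x v)
    (h1 : ∀ k, k ≤ n → ∀ x ∈ U, ∀ v : Fin k → E, ‖f k x v‖ ≤ M * ∏ i, ‖v i‖)
    (h2 : ∀ k, k ≤ n → ∀ x ∈ U, ∀ y ∈ U, ∀ v : Fin k → E,
      ‖lipRemainder n f k x y v‖ ≤ M * ‖x - y‖ ^ ((n:ℝ) + ε - k) * ∏ i, ‖v i‖) :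
    HasFTaylorSeriesUpToOn (n : ℕ) (fun x => f 0 x 0) (fun x k => f k x) U ∧
      (∀ k ≤ n, ∀ x ∈ U, ‖f k x‖ ≤ M) ∧
      (∀ x ∈ U, ∀ y ∈ U, ‖f n x - f n y‖ ≤ M * ‖x - y‖ ^ ε) := by
  have hHolder : ∀ x ∈ U, ∀ y ∈ U, ‖f n x - f n y‖ ≤ M * ‖x - y‖ ^ ε := by
    intro x hx y hy
    refine ContinuousMultilinearMap.opNorm_le_bound
      (mul_nonneg hM (Real.rpow_nonneg (norm_nonneg _) _)) fun v => ?_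
    have h := h2 n le_rfl x hx y hy v
    rw [lipRemainder_top] at h
    rw [show ((n:ℝ) + ε - (n:ℝ)) = ε from by ring] at h
    rw [ContinuousMultilinearMap.sub_apply]
    refine h.trans ?_
    rw [mul_assoc]
  refine ⟨⟨fun x hx => ?_, fun m hm x hx => ?_, fun m hm => ?_⟩,
    fun k hk x hx => ContinuousMultilinearMap.opNorm_le_bound hM (h1 k hk x hx), hHolder⟩
  · rfl
  · have hmn : m < n := by exact_mod_cast hm
    exact lip_fderiv n ε M hε0 hε1 hM U f hsymm h1 h2 m hmn x hx
  · have hmn : m ≤ n := by exact_mod_cast hm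
    rcases eq_or_lt_of_le hmn with rfl | hlt
    · intro x hx
      have hev : ∀ᶠ y in nhdsWithin x U, ‖f m y - f m x‖ ≤ M * ‖y - x‖ ^ ε := by
        filter_upwards [eventually_mem_nhdsWithin] with y hy
        exact hHolder y hy x hx
      have hsq := squeeze_zero_norm' hev (tendsto_aux M ε hε0 x U)
      exact tendsto_sub_nhds_zero_iff.mp hsq
    · intro x hx
      exact (lip_fderiv n ε M hε0 hε1 hM U f hsymm h1 h2 m hlt x hx).continuousWithinAt

end AuxLemmas

/-- **Characterisation of Lipschitz maps on open (convex) domains** (Theorem 2.3).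
(A1): the collection `(f⁰,…,fⁿ)` is Lip-(n+ε) on `U` with norm at most `M`.
(A2): `f⁰` is `n` times differentiable on `U` with successive derivatives
`f¹,…,fⁿ` (expressed via `HasFTaylorSeriesUpToOn`), all of `‖f⁰‖_∞,…,‖fⁿ‖_∞`
are at most `M`, and `fⁿ` is `ε`-Hölder with constant `M`.
If `U` is open then (A1) → (A2); if `U` is open and convex then (A1) ↔ (A2). -/
theorem statement1 {E F : Type*} [NormedAddCommGroup E] [NormedSpace ℝ E]
    [NormedAddCommGroup F] [NormedSpace ℝ F]
    (n : ℕ) (ε : ℝ) (hε0 : 0 < ε) (hε1 : ε ≤ 1) (M : ℝ) (hM : 0 ≤ M)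
    (U : Set E)
    (f : ∀ k : ℕ, E → ContinuousMultilinearMap ℝ (fun _ : Fin k => E) F)
    (hsymm : IsSymmColl n f U) :
    (IsOpen U →
      IsLipCollBetween (n + ε) 0 n M f U →
        (HasFTaylorSeriesUpToOn (n : ℕ) (fun x => f 0 x 0)
            (fun x k => f k x) U ∧
          (∀ k ≤ n, ∀ x ∈ U, ‖f k x‖ ≤ M) ∧
          (∀ x ∈ U, ∀ y ∈ U, ‖f n x - f n y‖ ≤ M * ‖x - y‖ ^ ε))) ∧
    (IsOpen U → Convex ℝ U →
      (IsLipCollBetween (n + ε) 0 n M f U ↔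
        (HasFTaylorSeriesUpToOn (n : ℕ) (fun x => f 0 x 0)
            (fun x k => f k x) U ∧
          (∀ k ≤ n, ∀ x ∈ U, ‖f k x‖ ≤ M) ∧
          (∀ x ∈ U, ∀ y ∈ U, ‖f n x - f n y‖ ≤ M * ‖x - y‖ ^ ε)))) := by
  have fwd : IsLipCollBetween (n + ε) 0 n M f U →
      (HasFTaylorSeriesUpToOn (n : ℕ) (fun x => f 0 x 0) (fun x k => f k x) U ∧
        (∀ k ≤ n, ∀ x ∈ U, ‖f k x‖ ≤ M) ∧
        (∀ x ∈ U, ∀ y ∈ U, ‖f n x - f n y‖ ≤ M * ‖x - y‖ ^ ε)) := by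
    intro hlip
    exact lip_to_A2 n ε M hε0 hε1 hM U f hsymm
      (fun k hk x hx v => hlip.1 k (Nat.zero_le k) hk x hx v)
      (fun k hk x hx y hy v => hlip.2 k (Nat.zero_le k) hk x hx y hy v)
  refine ⟨fun _ => fwd, fun _ hconv => ⟨fwd, ?_⟩⟩
  rintro ⟨hT, hbd, hH⟩
  refine ⟨fun k _ hk x hx v => ?_, fun k _ hk x hx y hy v => ?_⟩
  · calc ‖f k x v‖ ≤ ‖f k x‖ * ∏ i, ‖v i‖ := (f k x).le_opNorm v
      _ ≤ M * ∏ i, ‖v i‖ := mul_le_mul_of_nonneg_right (hbd k hk x hx)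
          (Finset.prod_nonneg fun _ _ => norm_nonneg _)
  · exact remainder_bound n ε M hε0 hM U hconv f hsymm hT hH (n - k) k hk rfl x hx y hy v


end
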